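/- Let n ≥ 2 and let w, w' ∈ {0,1}^{{-1,1}^n} be distinct 0–1 vectors indexed by the facets of the cross polytope, each of Hamming weight 2^{n-1}, with Hamming distance dist(w, w') ≥ 2^n/4. Then the corresponding cross polytopes with peaks satisfy vol(B_w) = vol(B_{w'}) and the volume of the symmetric difference B_w Δ B_{w'} is at least vol(O_n)/(4(n-1)). -/

import Mathlib

open MeasureTheory Set ENNReal Finset Pointwise

noncomputable def crossPolytope (n : ℕ) : Set (Fin n → ℝ) :=
  convexHull ℝ ((Set.range fun i : Fin n => Pi.single i (1 : ℝ)) ∪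
    (Set.range fun i : Fin n => Pi.single i (-1 : ℝ)))

def signVec (n : ℕ) (b : Fin n → Bool) : Fin n → ℝ := fun i => if b i then 1 else -1

noncomputable def peak (n : ℕ) (s : Fin n → ℝ) : Set (Fin n → ℝ) :=
  convexHull ℝ ((Set.range fun i : Fin n => Pi.single i (s i)) ∪ {((n : ℝ) - 1)⁻¹ • s})

-- auxiliary defs
noncomputable def cornerSimplex (n : ℕ) : Set (Fin n → ℝ) :=
  convexHull ℝ ({0} ∪ Set.range fun i : Fin n => Pi.single i (1 : ℝ))

noncomputable def flipMap (n : ℕ) (b : Fin n → Bool) : (Fin n → ℝ) →ₗ[ℝ] (Fin n → ℝ) :=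
  Matrix.toLin' (Matrix.diagonal (signVec n b))

noncomputable def shearMap (n : ℕ) : (Fin n → ℝ) →ₗ[ℝ] (Fin n → ℝ) :=
  Matrix.toLin' ((1 : Matrix (Fin n) (Fin n) ℝ) + Matrix.replicateCol Unit (fun _ : Fin n => -(((n : ℝ) - 1)⁻¹)) * Matrix.replicateRow Unit (fun _ : Fin n => (1:ℝ)))

lemma signVec_mul_self (n : ℕ) (b : Fin n → Bool) (i : Fin n) :
    signVec n b i * signVec n b i = 1 := by
  unfold signVec; split <;> norm_num

lemma abs_signVec (n : ℕ) (b : Fin n → Bool) (i : Fin n) : |signVec n b i| = 1 := by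
  unfold signVec; split <;> norm_num

lemma flipMap_apply (n : ℕ) (b : Fin n → Bool) (x : Fin n → ℝ) (i : Fin n) :
    flipMap n b x i = signVec n b i * x i := by
  simp [flipMap, Matrix.toLin'_apply, Matrix.mulVec_diagonal]

lemma abs_det_flipMap (n : ℕ) (b : Fin n → Bool) : |LinearMap.det (flipMap n b)| = 1 := by
  rw [flipMap, LinearMap.det_toLin', Matrix.det_diagonal, Finset.abs_prod]
  simp [abs_signVec]

lemma shearMap_apply (n : ℕ) (x : Fin n → ℝ) (i : Fin n) :
    shearMap n x i = x i - ((n : ℝ) - 1)⁻¹ * ∑ j, x j := by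
  simp [shearMap, Matrix.toLin'_apply, Matrix.add_mulVec, Matrix.mulVec, Matrix.replicateCol,
    Matrix.replicateRow, Matrix.mul_apply, dotProduct, Finset.mul_sum, sub_eq_add_neg, Finset.sum_neg_distrib]

lemma det_shearMap (n : ℕ) (hn : 2 ≤ n) :
    LinearMap.det (shearMap n) = -((n : ℝ) - 1)⁻¹ := by
  have hn1 : (1:ℝ) ≤ (n:ℝ) - 1 := by
    have : (2:ℝ) ≤ n := by exact_mod_cast hn
    linarith
  have h0 : ((n:ℝ) - 1) ≠ 0 := by linarith
  rw [shearMap, LinearMap.det_toLin', Matrix.det_one_add_replicateCol_mul_replicateRow]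
  rw [dotProduct]
  simp only [one_mul, Finset.sum_neg_distrib, Finset.sum_const, Finset.card_univ,
    Fintype.card_fin, nsmul_eq_mul]
  field_simp
  ring

lemma abs_det_shearMap (n : ℕ) (hn : 2 ≤ n) :
    |LinearMap.det (shearMap n)| = ((n : ℝ) - 1)⁻¹ := by
  have hn1 : (1:ℝ) ≤ (n:ℝ) - 1 := by
    have : (2:ℝ) ≤ n := by exact_mod_cast hn
    linarith
  rw [det_shearMap n hn, abs_neg, abs_of_nonneg (by positivity)]

lemma image_translate {n : ℕ} (v : Fin n → ℝ) (S : Set (Fin n → ℝ)) :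
    (fun x => v + x) '' convexHull ℝ S = convexHull ℝ ((fun x => v + x) '' S) := by
  have h1 : (fun x => v + x) '' convexHull ℝ S = v +ᵥ convexHull ℝ S := rfl
  have h2 : (fun x => v + x) '' S = v +ᵥ S := rfl
  rw [h1, h2, convexHull_vadd]

lemma peak_eq_image (n : ℕ) (b : Fin n → Bool) :
    peak n (signVec n b) =
      (fun x => (((n:ℝ)-1)⁻¹ • signVec n b) + (flipMap n b ∘ₗ shearMap n) x) ''
        cornerSimplex n := by
  have h0 : (((n:ℝ)-1)⁻¹ • signVec n b) + (flipMap n b ∘ₗ shearMap n) 0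
      = ((n:ℝ)-1)⁻¹ • signVec n b := by simp
  have he : ∀ i : Fin n, (((n:ℝ)-1)⁻¹ • signVec n b) +
      (flipMap n b ∘ₗ shearMap n) (Pi.single i (1:ℝ)) = Pi.single i (signVec n b i) := by
    intro i
    funext j
    have hsum : ∑ k, Pi.single i (1:ℝ) k = 1 := by simp [Pi.single_apply]
    simp only [Pi.add_apply, Pi.smul_apply, smul_eq_mul, LinearMap.comp_apply,
      flipMap_apply, shearMap_apply, hsum, mul_one]
    rcases eq_or_ne j i with rfl | hji
    · simp only [Pi.single_eq_same]
      ring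
    · simp only [Pi.single_apply, if_neg hji]
      ring
  have hcomp : (fun x => (((n:ℝ)-1)⁻¹ • signVec n b) + (flipMap n b ∘ₗ shearMap n) x)
      = (fun y => (((n:ℝ)-1)⁻¹ • signVec n b) + y) ∘ (flipMap n b ∘ₗ shearMap n) := rfl
  rw [hcomp, Set.image_comp, cornerSimplex, LinearMap.image_convexHull, image_translate]
  have hgen : (fun y => (((n:ℝ)-1)⁻¹ • signVec n b) + y) ''
        ((flipMap n b ∘ₗ shearMap n) '' ({0} ∪ Set.range fun i : Fin n => Pi.single i (1:ℝ)))
      = (Set.range fun i : Fin n => Pi.single i (signVec n b i))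
          ∪ {((n:ℝ)-1)⁻¹ • signVec n b} := by
    rw [Set.image_union, Set.image_union, Set.image_singleton, Set.image_singleton,
      ← Set.range_comp, ← Set.range_comp, Set.union_comm]
    congr 1
    · exact congrArg Set.range (funext fun i => he i)
    · exact congrArg (fun z => ({z} : Set (Fin n → ℝ))) h0
  rw [hgen]
  rfl

lemma cornerSimplex_subset_nonneg (n : ℕ) :
    cornerSimplex n ⊆ {x : Fin n → ℝ | ∀ i, 0 ≤ x i} := by
  have hconv : Convex ℝ {x : Fin n → ℝ | ∀ i, 0 ≤ x i} := by
    have : {x : Fin n → ℝ | ∀ i, 0 ≤ x i} = Set.pi Set.univ (fun _ => Set.Ici (0:ℝ)) := by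
      ext x; simp [Set.mem_pi, Pi.le_def]
    rw [this]
    exact convex_pi fun i _ => convex_Ici 0
  refine convexHull_min ?_ hconv
  rintro x (rfl | ⟨i, rfl⟩)
  · intro i; simp
  · intro j; simp [Pi.single_apply]
    split <;> norm_num

lemma mem_cornerSimplex (n : ℕ) (y : Fin n → ℝ) (h0 : ∀ i, 0 ≤ y i)
    (h1 : ∑ i, y i ≤ 1) : y ∈ cornerSimplex n := by
  have hmem := (convex_convexHull ℝ ({0} ∪ Set.range fun i : Fin n => Pi.single i (1:ℝ))).sum_mem
    (t := (Finset.univ : Finset (Option (Fin n))))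
    (w := fun o => o.elim (1 - ∑ i, y i) y)
    (z := fun o => o.elim 0 (fun i => Pi.single i 1))
    (fun o _ => by cases o with
      | none => simpa using sub_nonneg.2 h1
      | some i => exact h0 i)
    (by rw [Fintype.sum_option]; simp)
    (fun o _ => by cases o with
      | none => exact subset_convexHull ℝ _ (Or.inl rfl)
      | some i => exact subset_convexHull ℝ _ (Or.inr ⟨i, rfl⟩))
  have hsum : ∑ o : Option (Fin n), (fun o => o.elim (1 - ∑ i, y i) y) o •
      (fun o => o.elim 0 (fun i => Pi.single i (1:ℝ))) o = y := by
    rw [Fintype.sum_option]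
    simp only [Option.elim, smul_zero, zero_add]
    funext j
    simp only [Finset.sum_apply, Pi.smul_apply, smul_eq_mul]
    rw [Finset.sum_congr rfl (fun i _ => by rw [Pi.single_apply, mul_ite, mul_one, mul_zero])]
    simp [Finset.sum_ite_eq']
  rw [hsum] at hmem
  exact hmem

lemma convex_l1ball (n : ℕ) : Convex ℝ {x : Fin n → ℝ | ∑ i, |x i| ≤ 1} := by
  intro x hx y hy a b ha hb hab
  simp only [Set.mem_setOf_eq] at *
  calc ∑ i, |(a • x + b • y) i| ≤ ∑ i, (a * |x i| + b * |y i|) := by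
        refine Finset.sum_le_sum fun i _ => ?_
        simp only [Pi.add_apply, Pi.smul_apply, smul_eq_mul]
        calc |a * x i + b * y i| ≤ |a * x i| + |b * y i| := abs_add_le _ _
          _ = a * |x i| + b * |y i| := by
              rw [abs_mul, abs_mul, abs_of_nonneg ha, abs_of_nonneg hb]
    _ = a * ∑ i, |x i| + b * ∑ i, |y i| := by
        rw [Finset.sum_add_distrib, Finset.mul_sum, Finset.mul_sum]
    _ ≤ a * 1 + b * 1 := by
        gcongr
    _ = 1 := by linarith

lemma cross_subset_l1 (n : ℕ) :
    crossPolytope n ⊆ {x : Fin n → ℝ | ∑ i, |x i| ≤ 1} := by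
  refine convexHull_min ?_ (convex_l1ball n)
  rintro x (⟨i, rfl⟩ | ⟨i, rfl⟩) <;>
  · simp only [Set.mem_setOf_eq]
    rw [Finset.sum_congr rfl (fun j _ => by rw [Pi.single_apply, apply_ite abs])]
    simp [Finset.sum_ite_eq']

lemma flip_corner_subset_cross (n : ℕ) (hn : 1 ≤ n) (b : Fin n → Bool) :
    (flipMap n b) '' cornerSimplex n ⊆ crossPolytope n := by
  rw [cornerSimplex, LinearMap.image_convexHull]
  refine convexHull_min ?_ (convex_convexHull ℝ _)
  rintro x (⟨y, (rfl | ⟨i, rfl⟩), rfl⟩)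
  · -- flip 0 = 0 ∈ cross
    rw [map_zero]
    have i0 : Fin n := ⟨0, hn⟩
    have h1 : Pi.single i0 (1:ℝ) ∈ crossPolytope n :=
      subset_convexHull ℝ _ (Or.inl ⟨i0, rfl⟩)
    have h2 : Pi.single i0 (-1:ℝ) ∈ crossPolytope n :=
      subset_convexHull ℝ _ (Or.inr ⟨i0, rfl⟩)
    have := (convex_convexHull ℝ _) h1 h2 (by norm_num : (0:ℝ) ≤ 1/2)
      (by norm_num : (0:ℝ) ≤ 1/2) (by norm_num)
    have heq : (1/2 : ℝ) • (Pi.single i0 (1:ℝ) : Fin n → ℝ)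
        + (1/2 : ℝ) • (Pi.single i0 (-1:ℝ) : Fin n → ℝ) = (0 : Fin n → ℝ) := by
      funext j; simp [Pi.single_apply]; split <;> norm_num
    rwa [heq] at this
  · -- flip (e i) = single i (s i)
    have heq : flipMap n b (Pi.single i (1:ℝ)) = Pi.single i (signVec n b i) := by
      funext j
      rw [flipMap_apply]
      rcases eq_or_ne j i with rfl | hji
      · simp
      · simp [Pi.single_apply, if_neg hji]
    rw [heq]
    rcases Bool.eq_false_or_eq_true (b i) with hb | hb
    · exact subset_convexHull ℝ _ (Or.inl ⟨i, by simp [signVec, hb]⟩)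
    · exact subset_convexHull ℝ _ (Or.inr ⟨i, by simp [signVec, hb]⟩)

lemma l1_subset_union (n : ℕ) :
    {x : Fin n → ℝ | ∑ i, |x i| ≤ 1} ⊆ ⋃ b : Fin n → Bool, (flipMap n b) '' cornerSimplex n := by
  intro x hx
  simp only [Set.mem_setOf_eq] at hx
  refine Set.mem_iUnion.2 ⟨fun i => decide (0 ≤ x i), ⟨fun i => |x i|, ?_, ?_⟩⟩
  · exact mem_cornerSimplex n _ (fun i => abs_nonneg _) hx
  · funext i
    rw [flipMap_apply]
    by_cases h : 0 ≤ x i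
    · simp [signVec, h, abs_of_nonneg h]
    · simp [signVec, h, abs_of_neg (lt_of_not_ge h)]

lemma cross_eq_union (n : ℕ) (hn : 1 ≤ n) :
    crossPolytope n = ⋃ b : Fin n → Bool, (flipMap n b) '' cornerSimplex n := by
  apply Set.Subset.antisymm
  · exact (cross_subset_l1 n).trans (l1_subset_union n)
  · exact Set.iUnion_subset fun b => flip_corner_subset_cross n hn b

noncomputable def dotL (n : ℕ) (b : Fin n → Bool) : (Fin n → ℝ) →ₗ[ℝ] ℝ where
  toFun x := ∑ i, signVec n b i * x i
  map_add' x y := by simp [mul_add, Finset.sum_add_distrib]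
  map_smul' c x := by
    simp only [Pi.smul_apply, smul_eq_mul, RingHom.id_apply, Finset.mul_sum]
    exact Finset.sum_congr rfl fun i _ => by ring

def orthant (n : ℕ) (b : Fin n → Bool) : Set (Fin n → ℝ) :=
  {x | ∀ i, 0 ≤ signVec n b i * x i}

lemma convex_orthant (n : ℕ) (b : Fin n → Bool) : Convex ℝ (orthant n b) := by
  have : orthant n b = ⋂ i, {x : Fin n → ℝ | 0 ≤ signVec n b i * x i} := by
    ext x; simp [orthant]
  rw [this]
  refine convex_iInter fun i => ?_
  have hlin : IsLinearMap ℝ (fun x : Fin n → ℝ => signVec n b i * x i) :=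
    ⟨fun x y => by simp [mul_add], fun c x => by simp; ring⟩
  exact convex_halfSpace_ge hlin 0

lemma flip_corner_subset_orthant (n : ℕ) (b : Fin n → Bool) :
    (flipMap n b) '' cornerSimplex n ⊆ orthant n b := by
  rintro x ⟨y, hy, rfl⟩ i
  rw [flipMap_apply, ← mul_assoc, signVec_mul_self, one_mul]
  exact cornerSimplex_subset_nonneg n hy i

lemma peak_subset_orthant (n : ℕ) (hn : 1 ≤ n) (b : Fin n → Bool) :
    peak n (signVec n b) ⊆ orthant n b := by
  have hinv : (0:ℝ) ≤ ((n:ℝ) - 1)⁻¹ := by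
    refine inv_nonneg.2 (sub_nonneg.2 ?_)
    exact_mod_cast hn
  refine convexHull_min ?_ (convex_orthant n b)
  rintro x (⟨i, rfl⟩ | rfl)
  · intro j
    rcases eq_or_ne j i with rfl | hji
    · simp [signVec_mul_self]
    · simp [Pi.single_apply, if_neg hji]
  · intro j
    simp only [Pi.smul_apply, smul_eq_mul, ← mul_assoc]
    rw [mul_comm (signVec n b j), mul_assoc, signVec_mul_self, mul_one]
    exact hinv

lemma volume_coordZero (n : ℕ) (i : Fin n) :
    volume {x : Fin n → ℝ | x i = 0} = 0 := by
  have h : {x : Fin n → ℝ | x i = 0}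
      = (LinearMap.ker (LinearMap.proj i : (Fin n → ℝ) →ₗ[ℝ] ℝ) : Set (Fin n → ℝ)) := by
    ext x; simp [LinearMap.mem_ker]
  rw [h]
  refine Measure.addHaar_submodule volume _ fun htop => ?_
  have h1 : (Pi.single i (1:ℝ) : Fin n → ℝ) ∈
      LinearMap.ker (LinearMap.proj i : (Fin n → ℝ) →ₗ[ℝ] ℝ) := htop ▸ Submodule.mem_top
  simp [LinearMap.mem_ker] at h1

lemma orthant_inter_null (n : ℕ) {b b' : Fin n → Bool} (h : b ≠ b') :
    volume (orthant n b ∩ orthant n b') = 0 := by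
  obtain ⟨i, hi⟩ : ∃ i, b i ≠ b' i := by
    by_contra hc
    push_neg at hc
    exact h (funext hc)
  refine measure_mono_null (fun x hx => ?_) (volume_coordZero n i)
  obtain ⟨h1, h2⟩ := hx
  have h1 := h1 i
  have h2 := h2 i
  simp only [Set.mem_setOf_eq]
  have hs : signVec n b' i = -signVec n b i := by
    unfold signVec
    rcases Bool.eq_false_or_eq_true (b i) with hb | hb <;>
      rcases Bool.eq_false_or_eq_true (b' i) with hb' | hb' <;>
      simp_all
  rw [hs] at h2
  have h3 : signVec n b i * x i = 0 := le_antisymm (by linarith) h1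
  have h4 : x i = signVec n b i * (signVec n b i * x i) := by
    rw [← mul_assoc, signVec_mul_self, one_mul]
  rw [h3, mul_zero] at h4
  exact h4

lemma volume_hyperplane (n : ℕ) (hn : 1 ≤ n) (b : Fin n → Bool) :
    volume {x : Fin n → ℝ | dotL n b x = 1} = 0 := by
  have hnR : (0:ℝ) < n := by exact_mod_cast hn
  set x₀ : Fin n → ℝ := (-(n:ℝ)⁻¹) • signVec n b with hx₀
  have hfx₀ : dotL n b x₀ = -1 := by
    simp only [dotL, LinearMap.coe_mk, AddHom.coe_mk, hx₀, Pi.smul_apply, smul_eq_mul]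
    rw [Finset.sum_congr rfl (fun i _ => by
      rw [show signVec n b i * (-(n:ℝ)⁻¹ * signVec n b i)
        = -(n:ℝ)⁻¹ * (signVec n b i * signVec n b i) by ring, signVec_mul_self, mul_one])]
    simp [Finset.sum_const, Finset.card_univ]
    field_simp
  have hset : {x : Fin n → ℝ | dotL n b x = 1}
      = (fun x => x₀ + x) ⁻¹' (LinearMap.ker (dotL n b) : Set (Fin n → ℝ)) := by
    ext x
    simp only [Set.mem_setOf_eq, Set.mem_preimage, SetLike.mem_coe, LinearMap.mem_ker,
      map_add, hfx₀]
    constructor <;> intro h <;> linarith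
  rw [hset, measure_preimage_add]
  refine Measure.addHaar_submodule volume _ fun htop => ?_
  have i0 : Fin n := ⟨0, hn⟩
  have h1 : (Pi.single i0 (1:ℝ) : Fin n → ℝ) ∈ LinearMap.ker (dotL n b) :=
    htop ▸ Submodule.mem_top
  rw [LinearMap.mem_ker] at h1
  have : dotL n b (Pi.single i0 (1:ℝ)) = signVec n b i0 := by
    simp only [dotL, LinearMap.coe_mk, AddHom.coe_mk]
    rw [Finset.sum_congr rfl (fun j _ => by rw [Pi.single_apply, mul_ite, mul_one, mul_zero])]
    simp [Finset.sum_ite_eq']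
  rw [this] at h1
  have := abs_signVec n b i0
  rw [h1] at this
  norm_num at this

lemma peak_subset_halfspace (n : ℕ) (hn : 2 ≤ n) (b : Fin n → Bool) :
    peak n (signVec n b) ⊆ {x : Fin n → ℝ | 1 ≤ dotL n b x} := by
  have hn1 : (1:ℝ) ≤ (n:ℝ) - 1 := by
    have : (2:ℝ) ≤ n := by exact_mod_cast hn
    linarith
  refine convexHull_min ?_ (convex_halfSpace_ge (dotL n b).isLinear 1)
  rintro x (⟨i, rfl⟩ | rfl)
  · have : dotL n b (Pi.single i (signVec n b i)) = 1 := by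
      simp only [dotL, LinearMap.coe_mk, AddHom.coe_mk]
      rw [Finset.sum_congr rfl (fun j _ => by rw [Pi.single_apply, mul_ite, mul_zero])]
      simp [Finset.sum_ite_eq', signVec_mul_self]
    simp [Set.mem_setOf_eq, this]
  · have : dotL n b (((n:ℝ)-1)⁻¹ • signVec n b) = ((n:ℝ)-1)⁻¹ * n := by
      simp only [dotL, LinearMap.coe_mk, AddHom.coe_mk, Pi.smul_apply, smul_eq_mul]
      rw [Finset.sum_congr rfl (fun i _ => by
        rw [show signVec n b i * (((n:ℝ)-1)⁻¹ * signVec n b i)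
          = ((n:ℝ)-1)⁻¹ * (signVec n b i * signVec n b i) by ring, signVec_mul_self, mul_one])]
      simp [Finset.sum_const, Finset.card_univ]
      ring
    simp only [Set.mem_setOf_eq, this]
    have hnR : (2:ℝ) ≤ n := by exact_mod_cast hn
    rw [inv_mul_eq_div, le_div_iff₀ (by linarith)]
    linarith
  
lemma l1_subset_halfspace (n : ℕ) (b : Fin n → Bool) :
    {x : Fin n → ℝ | ∑ i, |x i| ≤ 1} ⊆ {x : Fin n → ℝ | dotL n b x ≤ 1} := by
  intro x hx
  simp only [Set.mem_setOf_eq] at *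
  calc dotL n b x = ∑ i, signVec n b i * x i := rfl
    _ ≤ ∑ i, |x i| := by
        refine Finset.sum_le_sum fun i _ => ?_
        calc signVec n b i * x i ≤ |signVec n b i * x i| := le_abs_self _
          _ = |x i| := by rw [abs_mul, abs_signVec, one_mul]
    _ ≤ 1 := hx

lemma compact_cornerSimplex (n : ℕ) : IsCompact (cornerSimplex n) :=
  ((Set.finite_singleton _).union (Set.finite_range _)).isCompact_convexHull ℝ

lemma compact_peak (n : ℕ) (s : Fin n → ℝ) : IsCompact (peak n s) :=
  ((Set.finite_range _).union (Set.finite_singleton _)).isCompact_convexHull ℝ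

lemma compact_cross (n : ℕ) : IsCompact (crossPolytope n) :=
  ((Set.finite_range _).union (Set.finite_range _)).isCompact_convexHull ℝ

lemma volume_flip_image (n : ℕ) (b : Fin n → Bool) :
    volume ((flipMap n b) '' cornerSimplex n) = volume (cornerSimplex n) := by
  rw [Measure.addHaar_image_linearMap, abs_det_flipMap]
  simp

lemma volume_cross (n : ℕ) (hn : 1 ≤ n) :
    volume (crossPolytope n) = (2^n : ℕ) * volume (cornerSimplex n) := by
  rw [cross_eq_union n hn]
  rw [measure_iUnion₀ ?hd ?hm]
  case hd =>
    intro b b' h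
    exact measure_mono_null
      (Set.inter_subset_inter (flip_corner_subset_orthant n b) (flip_corner_subset_orthant n b'))
      (orthant_inter_null n h)
  case hm =>
    intro b
    exact (((compact_cornerSimplex n).image
      (LinearMap.continuous_of_finiteDimensional _)).isClosed.measurableSet).nullMeasurableSet
  rw [tsum_fintype]
  simp only [volume_flip_image]
  rw [Finset.sum_const, Finset.card_univ, nsmul_eq_mul]
  congr 1
  simp [Fintype.card_fun]

lemma image_add_eq_preimage {n : ℕ} (v : Fin n → ℝ) (A : Set (Fin n → ℝ)) :
    (fun x => v + x) '' A = (fun x => -v + x) ⁻¹' A := by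
  ext x
  constructor
  · rintro ⟨a, ha, rfl⟩
    simpa using ha
  · intro hx
    exact ⟨-v + x, hx, by simp⟩

lemma volume_peak (n : ℕ) (hn : 2 ≤ n) (b : Fin n → Bool) :
    volume (peak n (signVec n b)) =
      ENNReal.ofReal (((n:ℝ)-1)⁻¹) * volume (cornerSimplex n) := by
  rw [peak_eq_image n b]
  have hcomp : (fun x => (((n:ℝ)-1)⁻¹ • signVec n b) + (flipMap n b ∘ₗ shearMap n) x)
      = (fun y => (((n:ℝ)-1)⁻¹ • signVec n b) + y) ∘ (flipMap n b ∘ₗ shearMap n) := rfl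
  rw [hcomp, Set.image_comp, image_add_eq_preimage, measure_preimage_add,
    Measure.addHaar_image_linearMap, LinearMap.det_comp, abs_mul, abs_det_flipMap,
    abs_det_shearMap n hn, one_mul]

lemma peak_inter_peak_null (n : ℕ) (hn : 1 ≤ n) {b b' : Fin n → Bool} (h : b ≠ b') :
    volume (peak n (signVec n b) ∩ peak n (signVec n b')) = 0 :=
  measure_mono_null
    (Set.inter_subset_inter (peak_subset_orthant n hn b) (peak_subset_orthant n hn b'))
    (orthant_inter_null n h)

lemma peak_inter_cross_null (n : ℕ) (hn : 2 ≤ n) (b : Fin n → Bool) :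
    volume (peak n (signVec n b) ∩ crossPolytope n) = 0 := by
  refine measure_mono_null (fun x hx => ?_) (volume_hyperplane n (le_trans one_le_two hn) b)
  obtain ⟨h1, h2⟩ := hx
  have ha : 1 ≤ dotL n b x := peak_subset_halfspace n hn b h1
  have hb : dotL n b x ≤ 1 := l1_subset_halfspace n b (cross_subset_l1 n h2)
  exact le_antisymm hb ha

noncomputable def body (n : ℕ) (w : (Fin n → Bool) → Bool) : Set (Fin n → ℝ) :=
  crossPolytope n ∪ ⋃ (b : Fin n → Bool) (_ : w b = true), peak n (signVec n b)

def wt {ι : Type*} [Fintype ι] (c : ι → Bool) : ℕ :=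
  (Finset.univ.filter fun i => c i = true).card

lemma volume_peaks_union (n : ℕ) (hn : 2 ≤ n) (w : (Fin n → Bool) → Bool) :
    volume (⋃ (b : Fin n → Bool) (_ : w b = true), peak n (signVec n b))
      = (wt w : ℝ≥0∞) * (ENNReal.ofReal (((n:ℝ)-1)⁻¹) * volume (cornerSimplex n)) := by
  rw [measure_iUnion₀ ?hd ?hm]
  case hd =>
    intro b b' hbb
    refine measure_mono_null (Set.inter_subset_inter ?_ ?_)
      (peak_inter_peak_null n (le_trans one_le_two hn) hbb) <;>
      exact Set.iUnion_subset fun _ => subset_rfl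
  case hm =>
    intro b
    by_cases h : w b = true
    · simp only [h, Set.iUnion_true]
      exact (compact_peak n _).isClosed.measurableSet.nullMeasurableSet
    · rw [Set.iUnion_eq_if, if_neg h]
      exact MeasurableSet.empty.nullMeasurableSet
  rw [tsum_fintype]
  have hterm : ∀ b : Fin n → Bool, volume (⋃ (_ : w b = true), peak n (signVec n b))
      = if w b = true then ENNReal.ofReal (((n:ℝ)-1)⁻¹) * volume (cornerSimplex n) else 0 := by
    intro b
    rw [Set.iUnion_eq_if]
    split
    · exact volume_peak n hn b
    · simp
  rw [Finset.sum_congr rfl fun b _ => hterm b, ← Finset.sum_filter]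
  rw [Finset.sum_const, nsmul_eq_mul]
  rfl

lemma volume_body (n : ℕ) (hn : 2 ≤ n) (w : (Fin n → Bool) → Bool) :
    volume (body n w) = volume (crossPolytope n)
      + (wt w : ℝ≥0∞) * (ENNReal.ofReal (((n:ℝ)-1)⁻¹) * volume (cornerSimplex n)) := by
  rw [body, measure_union₀ ?hm ?hd]
  case hm =>
    refine NullMeasurableSet.iUnion fun b => NullMeasurableSet.iUnion fun _ =>
      (compact_peak n _).isClosed.measurableSet.nullMeasurableSet
  case hd =>
    refine measure_mono_null (fun x hx => hx) ?_
    rw [Set.inter_iUnion]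
    refine measure_iUnion_null fun b => ?_
    rw [Set.inter_iUnion]
    refine measure_iUnion_null fun _ => ?_
    rw [Set.inter_comm]
    exact peak_inter_cross_null n hn b
  rw [volume_peaks_union n hn w]

theorem volume_symmDiff_bodies (n : ℕ) (hn : 2 ≤ n)
    (w w' : (Fin n → Bool) → Bool) (hne : w ≠ w')
    (hw : wt w = 2 ^ (n - 1)) (hw' : wt w' = 2 ^ (n - 1))
    (hdist : 2 ^ n / 4 ≤ hammingDist w w') :
    volume (body n w) = volume (body n w') ∧
    volume (crossPolytope n) / (4 * ((n : ℝ≥0∞) - 1)) ≤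
      volume (symmDiff (body n w) (body n w')) := by
  have hn1 : 1 ≤ n := le_trans one_le_two hn
  set V := volume (cornerSimplex n) with hV
  set p := ENNReal.ofReal (((n:ℝ)-1)⁻¹) * V with hp
  refine ⟨by rw [volume_body n hn w, volume_body n hn w', hw, hw'], ?_⟩
  -- the symmetric difference part
  classical
  set E : (Fin n → Bool) → Set (Fin n → ℝ) := fun b =>
    peak n (signVec n b) \
      (crossPolytope n ∪ ⋃ (b' : Fin n → Bool) (_ : b' ≠ b), peak n (signVec n b')) with hE
  have hEvol : ∀ b, volume (E b) = p := by
    intro b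
    have hnull : volume (peak n (signVec n b) ∩
        (crossPolytope n ∪ ⋃ (b' : Fin n → Bool) (_ : b' ≠ b), peak n (signVec n b'))) = 0 := by
      rw [Set.inter_union_distrib_left]
      refine measure_union_null (peak_inter_cross_null n hn b) ?_
      rw [Set.inter_iUnion]
      refine measure_iUnion_null fun b' => ?_
      rw [Set.inter_iUnion]
      exact measure_iUnion_null fun hb' =>
        peak_inter_peak_null n hn1 (Ne.symm hb')
    simp only [hE]
    have : peak n (signVec n b) \
        (crossPolytope n ∪ ⋃ (b' : Fin n → Bool) (_ : b' ≠ b), peak n (signVec n b'))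
        = peak n (signVec n b) \ (peak n (signVec n b) ∩
          (crossPolytope n ∪ ⋃ (b' : Fin n → Bool) (_ : b' ≠ b), peak n (signVec n b'))) := by
      rw [Set.diff_self_inter]
    rw [this, measure_diff_null hnull]
    exact volume_peak n hn b
  have hEm : ∀ b, NullMeasurableSet (E b) volume := by
    intro b
    refine (MeasurableSet.diff (compact_peak n _).isClosed.measurableSet ?_).nullMeasurableSet
    refine MeasurableSet.union (compact_cross n).isClosed.measurableSet ?_
    exact MeasurableSet.iUnion fun b' => MeasurableSet.iUnion fun _ =>
      (compact_peak n _).isClosed.measurableSet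
  have hEdisj : ∀ b b', b ≠ b' → Disjoint (E b) (E b') := by
    intro b b' hbb
    rw [Set.disjoint_left]
    intro x hxb hxb'
    have h1 : x ∈ peak n (signVec n b) := hxb.1
    have h2 := hxb'.2
    exact h2 (Or.inr (Set.mem_iUnion.2 ⟨b, Set.mem_iUnion.2 ⟨hbb, h1⟩⟩))
  have hpeak_sub_body : ∀ (u : (Fin n → Bool) → Bool) b, u b = true →
      peak n (signVec n b) ⊆ body n u := by
    intro u b hub x hx
    exact Set.mem_union_right _ (Set.mem_iUnion.2 ⟨b, Set.mem_iUnion.2 ⟨hub, hx⟩⟩)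
  set D : Finset (Fin n → Bool) := Finset.univ.filter (fun b => w b ≠ w' b) with hDdef
  have key : ∀ (u u' : (Fin n → Bool) → Bool) b, u b = true → u' b = false →
      E b ⊆ body n u \ body n u' := by
    intro u u' b hub hu'b x hx
    refine ⟨hpeak_sub_body u b hub hx.1, ?_⟩
    intro hxw
    rcases hxw with hxc | hxp
    · exact hx.2 (Or.inl hxc)
    · rw [Set.mem_iUnion] at hxp
      obtain ⟨b'', hb''⟩ := hxp
      rw [Set.mem_iUnion] at hb''
      obtain ⟨hub'', hxp2⟩ := hb''
      have hne'' : b'' ≠ b := by rintro rfl; rw [hub''] at hu'b; cases hu'b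
      exact hx.2 (Or.inr (Set.mem_iUnion.2 ⟨b'', Set.mem_iUnion.2 ⟨hne'', hxp2⟩⟩))
  have hEsub : ∀ b ∈ D, E b ⊆ symmDiff (body n w) (body n w') := by
    intro b hb
    rw [hDdef, Finset.mem_filter] at hb
    have hbne := hb.2
    rw [Set.symmDiff_def]
    rcases Bool.eq_false_or_eq_true (w b) with hwb | hwb
    · have hw'b : w' b = false := by
        rcases Bool.eq_false_or_eq_true (w' b) with h | h
        · exact absurd (hwb.trans h.symm) hbne
        · exact h
      exact (key w w' b hwb hw'b).trans Set.subset_union_left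
    · have hw'b : w' b = true := by
        rcases Bool.eq_false_or_eq_true (w' b) with h | h
        · exact h
        · exact absurd (hwb.trans h.symm) hbne
      exact (key w' w b hw'b hwb).trans Set.subset_union_right
  have hunion : volume (⋃ b ∈ D, E b) = (D.card : ℝ≥0∞) * p := by
    rw [measure_biUnion_finset₀ ?hd ?hm]
    · rw [Finset.sum_congr rfl fun b _ => hEvol b, Finset.sum_const, nsmul_eq_mul]
    case hd => exact fun b _ b' _ hbb => (hEdisj b b' hbb).aedisjoint
    case hm => exact fun b _ => hEm b
  have hle : (D.card : ℝ≥0∞) * p ≤ volume (symmDiff (body n w) (body n w')) := by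
    rw [← hunion]
    exact measure_mono (Set.iUnion₂_subset hEsub)
  have hcardD : hammingDist w w' = D.card := rfl
  have hnn : n - 2 + 2 = n := Nat.sub_add_cancel hn
  have h4 : (2:ℕ)^n / 4 = 2^(n-2) := by
    calc (2:ℕ)^n / 4 = 2^(n-2+2)/4 := by rw [hnn]
      _ = 2^(n-2)*4/4 := by rw [pow_add]; norm_num
      _ = 2^(n-2) := Nat.mul_div_cancel _ (by norm_num)
  have hcast : ((2^(n-2) : ℕ) : ℝ≥0∞) ≤ (D.card : ℝ≥0∞) := by
    refine Nat.cast_le.2 ?_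
    rw [← hcardD, ← h4]
    exact hdist
  have hcV : volume (crossPolytope n) = ((2^n : ℕ) : ℝ≥0∞) * V := volume_cross n hn1
  have hm1 : 1 ≤ n - 1 := by omega
  have hcoe : ((n : ℝ≥0∞) - 1) = ((n - 1 : ℕ) : ℝ≥0∞) := by
    rw [ENNReal.natCast_sub, Nat.cast_one]
  have hpeq : p = V / ((n - 1 : ℕ) : ℝ≥0∞) := by
    have hr : ((n:ℝ) - 1) = ((n - 1 : ℕ) : ℝ) := by
      rw [Nat.cast_sub hn1, Nat.cast_one]
    rw [hp, hr, ENNReal.ofReal_inv_of_pos (by exact_mod_cast hm1),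
      ENNReal.ofReal_natCast, ← ENNReal.div_eq_inv_mul]
  have h2n : ((2^n : ℕ) : ℝ≥0∞) = 4 * ((2^(n-2) : ℕ) : ℝ≥0∞) := by
    have h : (2:ℕ)^n = 4 * 2^(n-2) := by
      calc (2:ℕ)^n = 2^(n-2+2) := by rw [hnn]
        _ = 4 * 2^(n-2) := by rw [pow_add]; ring
    rw [h]
    push_cast
    ring
  calc volume (crossPolytope n) / (4 * ((n : ℝ≥0∞) - 1))
      = (4 * (((2^(n-2) : ℕ) : ℝ≥0∞) * V)) / (4 * ((n - 1 : ℕ) : ℝ≥0∞)) := by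
        rw [hcV, hcoe, h2n, mul_assoc]
    _ = ((2^(n-2) : ℕ) : ℝ≥0∞) * V / ((n - 1 : ℕ) : ℝ≥0∞) := by
        rw [ENNReal.mul_div_mul_left _ _ (by norm_num) (by norm_num)]
    _ = ((2^(n-2) : ℕ) : ℝ≥0∞) * (V / ((n - 1 : ℕ) : ℝ≥0∞)) := by
        rw [mul_div_assoc]
    _ = ((2^(n-2) : ℕ) : ℝ≥0∞) * p := by rw [hpeq]
    _ ≤ (D.card : ℝ≥0∞) * p := mul_le_mul_left hcast p
    _ ≤ volume (symmDiff (body n w) (body n w')) := hle
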